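/- Let f : ℝⁿ → ℝ be convex and differentiable, and let X : (0,∞) → ℝⁿ be a twice differentiable solution of the ODE 0 = Ẍ(t) + (3/t)Ẋ(t) + ∇f(X(t)) with X(t) → X₀ and Ẋ(t) → 0 as t → 0⁺. If X⋆ is a minimizer of f with f⋆ = f(X⋆), then for all t > 0, f(X(t)) − f⋆ ≤ 2‖X₀ − X⋆‖²/t². -/

import Mathlib

open Filter MeasureTheory
open scoped RealInnerProductSpace Topology

theorem agm_ode_rate_r3
    {E : Type*} [NormedAddCommGroup E] [InnerProductSpace ℝ E] [CompleteSpace E]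
    (f : E → ℝ) (g : E → E)
    (hgrad : ∀ x, HasGradientAt f (g x) x)
    (hconv : ∀ x y, 0 ≤ f x - f y - ⟪g y, x - y⟫)
    (X X' X'' : ℝ → E)
    (hX' : ∀ t ∈ Set.Ioi (0:ℝ), HasDerivAt X (X' t) t)
    (hX'' : ∀ t ∈ Set.Ioi (0:ℝ), HasDerivAt X' (X'' t) t)
    (hODE : ∀ t ∈ Set.Ioi (0:ℝ), X'' t + (3 / t) • X' t + g (X t) = 0)
    (X₀ : E) (hX0 : Tendsto X (𝓝[>] (0:ℝ)) (𝓝 X₀))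
    (hXd0 : Tendsto X' (𝓝[>] (0:ℝ)) (𝓝 0))
    (Xs : E) (hmin : ∀ x, f Xs ≤ f x) :
    ∀ t > (0:ℝ), f (X t) - f Xs ≤ 2 * ‖X₀ - Xs‖ ^ 2 / t ^ 2 := by
  set Z : ℝ → E := fun s => X s + (s / 2) • X' s - Xs with hZdef
  set φ : ℝ → ℝ := fun s => s ^ 2 * (f (X s) - f Xs) + 2 * ⟪Z s, Z s⟫ with hφdef
  -- derivative of φ
  have key : ∀ s ∈ Set.Ioi (0:ℝ), HasDerivAt φ
      (2 * s * ((f (X s) - f Xs) - ⟪g (X s), X s - Xs⟫)) s := by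
    intro s hs
    have hs0 : s ≠ 0 := ne_of_gt hs
    -- derivative of Z
    have hZ : HasDerivAt Z (X' s + ((s/2) • X'' s + (1/2 : ℝ) • X' s)) s := by
      exact ((hX' s hs).add (((hasDerivAt_id s).div_const 2).smul (hX'' s hs))).sub_const Xs
    have hg : g (X s) = -(X'' s + (3 / s) • X' s) :=
      eq_neg_of_add_eq_zero_right (hODE s hs)
    have hZ'eq : X' s + ((s/2) • X'' s + (1/2 : ℝ) • X' s) = (-(s/2)) • g (X s) := by
      rw [hg]
      match_scalars <;> field_simp <;> ring
    rw [hZ'eq] at hZ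
    -- derivative of f ∘ X
    have hd1 : HasDerivAt (fun u => f (X u)) ⟪g (X s), X' s⟫ s := by
      have := (hgrad (X s)).hasFDerivAt.comp_hasDerivAt s (hX' s hs)
      simpa [InnerProductSpace.toDual_apply_apply, Function.comp_def] using this
    have hd2 : HasDerivAt (fun u => u ^ 2 * (f (X u) - f Xs))
        ((2 * s) * (f (X s) - f Xs) + s ^ 2 * ⟪g (X s), X' s⟫) s := by
      have := (hasDerivAt_pow 2 s).mul (hd1.sub_const (f Xs))
      refine this.congr_deriv ?_
      push_cast
      ring
    have hd3 : HasDerivAt (fun u => (⟪Z u, Z u⟫ : ℝ))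
        (⟪Z s, (-(s/2)) • g (X s)⟫ + ⟪(-(s/2)) • g (X s), Z s⟫) s :=
      HasDerivAt.inner ℝ hZ hZ
    have htot := hd2.add (hd3.const_mul 2)
    refine htot.congr_deriv ?_
    have hsymm : ⟪(-(s/2)) • g (X s), Z s⟫ = ⟪Z s, (-(s/2)) • g (X s)⟫ := real_inner_comm _ _
    rw [hsymm]
    have : ⟪Z s, (-(s/2)) • g (X s)⟫ = (-(s/2)) * ⟪Z s, g (X s)⟫ := real_inner_smul_right _ _ _
    rw [this]
    have hZexp : ⟪Z s, g (X s)⟫ = ⟪X s - Xs, g (X s)⟫ + (s/2) * ⟪X' s, g (X s)⟫ := by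
      simp only [hZdef]
      rw [show X s + (s / 2) • X' s - Xs = (X s - Xs) + (s/2) • X' s by abel]
      rw [inner_add_left, real_inner_smul_left]
    rw [hZexp]
    rw [real_inner_comm (g (X s)) (X s - Xs), real_inner_comm (g (X s)) (X' s)]
    ring
  -- derivative nonpositive
  have hD : ∀ s ∈ Set.Ioi (0:ℝ), 2 * s * ((f (X s) - f Xs) - ⟪g (X s), X s - Xs⟫) ≤ 0 := by
    intro s hs
    have h := hconv Xs (X s)
    have hneg : ⟪g (X s), Xs - X s⟫ = -⟪g (X s), X s - Xs⟫ := by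
      rw [← inner_neg_right, neg_sub]
    rw [hneg] at h
    have h2 : (f (X s) - f Xs) - ⟪g (X s), X s - Xs⟫ ≤ 0 := by linarith
    have : (0:ℝ) < 2 * s := by linarith [Set.mem_Ioi.mp hs]
    nlinarith
  -- φ antitone on Ioi 0
  have mono : AntitoneOn φ (Set.Ioi (0:ℝ)) := by
    apply antitoneOn_of_deriv_nonpos (convex_Ioi 0)
    · intro s hs
      exact (key s hs).continuousAt.continuousWithinAt
    · rw [interior_Ioi]
      intro s hs
      exact (key s hs).differentiableAt.differentiableWithinAt
    · rw [interior_Ioi]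
      intro s hs
      rw [(key s hs).deriv]
      exact hD s hs
  -- limit of φ at 0⁺
  have hZlim : Tendsto Z (𝓝[>] (0:ℝ)) (𝓝 (X₀ - Xs)) := by
    have hhalf : Tendsto (fun s : ℝ => s / 2) (𝓝[>] (0:ℝ)) (𝓝 (0:ℝ)) := by
      have h : Tendsto (fun s : ℝ => s / 2) (𝓝 (0:ℝ)) (𝓝 ((0:ℝ)/2)) :=
        (continuous_id.div_const 2).tendsto 0
      simpa using h.mono_left nhdsWithin_le_nhds
    have := (hX0.add (hhalf.smul hXd0)).sub_const Xs
    simpa using this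
  have hflim : Tendsto (fun s => f (X s)) (𝓝[>] (0:ℝ)) (𝓝 (f X₀)) :=
    ((hgrad X₀).hasFDerivAt.differentiableAt.continuousAt.tendsto).comp hX0
  have hlim : Tendsto φ (𝓝[>] (0:ℝ)) (𝓝 (2 * ⟪X₀ - Xs, X₀ - Xs⟫)) := by
    have hsq : Tendsto (fun s : ℝ => s ^ 2) (𝓝[>] (0:ℝ)) (𝓝 (0:ℝ)) := by
      have := ((continuous_pow 2).tendsto (0:ℝ)).mono_left
        (nhdsWithin_le_nhds (s := Set.Ioi (0:ℝ)))
      simpa using this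
    have h1 : Tendsto (fun s => s ^ 2 * (f (X s) - f Xs)) (𝓝[>] (0:ℝ)) (𝓝 (0:ℝ)) := by
      have := hsq.mul (hflim.sub_const (f Xs))
      simpa using this
    have h2 : Tendsto (fun s => (2:ℝ) * ⟪Z s, Z s⟫) (𝓝[>] (0:ℝ))
        (𝓝 (2 * ⟪X₀ - Xs, X₀ - Xs⟫)) :=
      (hZlim.inner hZlim).const_mul 2
    have := h1.add h2
    simpa [hφdef] using this
  intro t ht
  -- φ t ≤ limit
  have hev : ∀ᶠ s in 𝓝[>] (0:ℝ), φ t ≤ φ s := by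
    filter_upwards [Ioo_mem_nhdsGT_of_mem (Set.left_mem_Ico.mpr ht)] with s hs
    exact mono hs.1 (Set.mem_Ioi.mpr ht) hs.2.le
  have hφt : φ t ≤ 2 * ⟪X₀ - Xs, X₀ - Xs⟫ := ge_of_tendsto hlim hev
  have hinner : (⟪X₀ - Xs, X₀ - Xs⟫ : ℝ) = ‖X₀ - Xs‖ ^ 2 := real_inner_self_eq_norm_sq _
  have hZnn : (0:ℝ) ≤ ⟪Z t, Z t⟫ := real_inner_self_nonneg
  have hmain : t ^ 2 * (f (X t) - f Xs) ≤ 2 * ‖X₀ - Xs‖ ^ 2 := by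
    have : t ^ 2 * (f (X t) - f Xs) ≤ φ t := by
      simp only [hφdef]; linarith
    rw [hinner] at hφt
    linarith
  rw [le_div_iff₀ (by positivity : (0:ℝ) < t ^ 2)]
  linarith [hmain]
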